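/- For every real d with 1/4 ≤ d < (47 − 5√57)/24 there exists n₀ such that for all n ≥ n₀ the following holds: if ℱ is a family of 3-element subsets of an n-element vertex set X with δ(ℱ) ≥ d·C(n,2), then |∂ℱ| ≥ (4√d − 2d − 1)·C(n,2). -/

import Mathlib

set_option maxHeartbeats 1000000

open Finset

lemma pair_eq_of_card_two {V : Type} [DecidableEq V] {e : Finset V} (h : e.card = 2)
    {x y : V} (hx : x ∈ e) (hy : y ∈ e) (hxy : y ≠ x) : e = {x, y} := by
  obtain ⟨u, v, huv, rfl⟩ := Finset.card_eq_two.mp h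
  simp only [Finset.mem_insert, Finset.mem_singleton] at hx hy
  rcases hx with rfl|rfl <;> rcases hy with rfl|rfl <;> simp_all [Finset.pair_comm]

theorem alg2 (s M a m : ℝ) (hs : 1/2 ≤ s) (hwc : 6*(1-s)^2 + 3*(1-s) - 2 > 0)
    (hw3 : 1/3 ≤ 1-s) (hM : 1 ≤ M)
    (ha1 : s*M < a) (ha2 : a ≤ (1 - 2*(1-s)^2)*M)
    (h2 : s^2*(M*(M+1))/2 + m ≤ a*(a-1)/2 + (M-a)^2) (hm : 0 ≤ m) :
    m ≤ (1-s)^2*(M*(M+1)) := by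
  have hM0 : (0:ℝ) < M := lt_of_lt_of_le zero_lt_one hM
  have hw12 : (1:ℝ) - s ≤ 1/2 := by linarith
  have hpos : 0 < (1 - 2*(1-s)^2)*M - s*M := by linarith
  have hFlo : s*M*(s*M-1)/2 + (M-s*M)^2 - s^2*(M*(M+1))/2 - (1-s)^2*(M*(M+1)) ≤ 0 := by
    nlinarith [sq_nonneg s, mul_pos hM0 hM0]
  have hFhi : ((1-2*(1-s)^2)*M)*(((1-2*(1-s)^2)*M)-1)/2 + (M-(1-2*(1-s)^2)*M)^2
      - s^2*(M*(M+1))/2 - (1-s)^2*(M*(M+1)) ≤ 0 := by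
    have h1 : (1 - s - 1/2) * (6*(1-s)^2 + 3*(1-s) - 2) ≤ 0 :=
      mul_nonpos_of_nonpos_of_nonneg (by linarith) (by linarith)
    nlinarith [mul_nonneg (mul_nonneg (by linarith : (0:ℝ) ≤ 1 - s) (mul_pos hM0 hM0).le)
        (neg_nonneg.mpr h1), mul_pos hM0 hM0]
  have t1 : ((1-2*(1-s)^2)*M - a) * (s*M*(s*M-1)/2 + (M-s*M)^2 - s^2*(M*(M+1))/2 - (1-s)^2*(M*(M+1))) ≤ 0 :=
    mul_nonpos_of_nonneg_of_nonpos (by linarith) hFlo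
  have t2 : (a - s*M) * (((1-2*(1-s)^2)*M)*(((1-2*(1-s)^2)*M)-1)/2 + (M-(1-2*(1-s)^2)*M)^2
      - s^2*(M*(M+1))/2 - (1-s)^2*(M*(M+1))) ≤ 0 :=
    mul_nonpos_of_nonneg_of_nonpos (by linarith) hFhi
  have t3 : 0 ≤ (3/2)*(a - s*M)*((1-2*(1-s)^2)*M - a)*((1-2*(1-s)^2)*M - s*M) :=
    mul_nonneg (mul_nonneg (mul_nonneg (by norm_num) (by linarith)) (by linarith)) (by linarith)
  have hprod : ((1-2*(1-s)^2)*M - s*M) * (a*(a-1)/2 + (M-a)^2 - s^2*(M*(M+1))/2 - (1-s)^2*(M*(M+1))) ≤ 0 := by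
    have key : ((1-2*(1-s)^2)*M - s*M) * (a*(a-1)/2 + (M-a)^2 - s^2*(M*(M+1))/2 - (1-s)^2*(M*(M+1)))
        = ((1-2*(1-s)^2)*M - a) * (s*M*(s*M-1)/2 + (M-s*M)^2 - s^2*(M*(M+1))/2 - (1-s)^2*(M*(M+1)))
          + (a - s*M) * (((1-2*(1-s)^2)*M)*(((1-2*(1-s)^2)*M)-1)/2 + (M-(1-2*(1-s)^2)*M)^2
            - s^2*(M*(M+1))/2 - (1-s)^2*(M*(M+1)))
          - (3/2)*(a - s*M)*((1-2*(1-s)^2)*M - a)*((1-2*(1-s)^2)*M - s*M) := by ring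
    rw [key]
    linarith [t1, t2, t3]
  have h3 : a*(a-1)/2 + (M-a)^2 - s^2*(M*(M+1))/2 - (1-s)^2*(M*(M+1)) ≤ 0 := by
    by_contra h
    push_neg at h
    nlinarith [mul_pos hpos h]
  linarith

theorem shadow_min_degree_small_d (d : ℝ) (hd1 : 1 / 4 ≤ d)
    (hd2 : d < (47 - 5 * Real.sqrt 57) / 24) :
    ∃ n₀ : ℕ, ∀ n : ℕ, n₀ ≤ n →
      ∀ (V : Type) [Fintype V] [DecidableEq V], Fintype.card V = n →
      ∀ ℱ : Finset (Finset V), (∀ F ∈ ℱ, F.card = 3) →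
      (∀ x : V, d * ((n : ℝ) * ((n : ℝ) - 1) / 2)
          ≤ (((ℱ.filter (fun F => x ∈ F)).card : ℝ))) →
      (4 * Real.sqrt d - 2 * d - 1) * ((n : ℝ) * ((n : ℝ) - 1) / 2)
        ≤ ((Finset.shadow ℱ).card : ℝ) := by
  have hd0 : (0:ℝ) ≤ d := le_trans (by norm_num) hd1
  set s := Real.sqrt d with hs_def
  have hs2 : s^2 = d := Real.sq_sqrt hd0
  have hs0 : 0 ≤ s := Real.sqrt_nonneg d
  have hs_half : 1/2 ≤ s := by
    rw [hs_def, show (1:ℝ)/2 = Real.sqrt (1/4) by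
      rw [show (1:ℝ)/4 = (1/2)^2 by norm_num, Real.sqrt_sq (by norm_num)]]
    exact Real.sqrt_le_sqrt hd1
  have ht2 : (Real.sqrt 57)^2 = 57 := Real.sq_sqrt (by norm_num)
  have ht0 : 0 ≤ Real.sqrt 57 := Real.sqrt_nonneg 57
  have ht7 : 7 < Real.sqrt 57 := by nlinarith [ht2, ht0]
  have ht8 : Real.sqrt 57 < 8 := by nlinarith [ht2, ht0]
  have hceq : ((15 - Real.sqrt 57)/12)^2 = (47 - 5*Real.sqrt 57)/24 := by
    linear_combination ht2/144
  have hs_lt : s < (15 - Real.sqrt 57)/12 := by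
    by_contra h
    push_neg at h
    have h2 : ((15 - Real.sqrt 57)/12)^2 ≤ s^2 := by nlinarith [ht7]
    rw [hceq, hs2] at h2
    linarith
  have hs23 : s ≤ 2/3 := by nlinarith [ht7]
  have hw3 : 1/3 ≤ 1 - s := by linarith
  have hwc : 6*(1-s)^2 + 3*(1-s) - 2 > 0 := by
    have hp : 0 < ((15 - Real.sqrt 57)/12 - s) * ((15 + Real.sqrt 57)/12 - s) := by
      apply mul_pos (by linarith)
      nlinarith [ht7]
    nlinarith [hp, ht2]
  clear_value s
  clear hs_def hd2 hs_lt hceq ht2 ht0 ht7 ht8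
  refine ⟨2, fun n hn V _ _ hcard ℱ hF3 hdeg => ?_⟩
  have hV : Nonempty V := by
    rw [← Fintype.card_pos_iff, hcard]; omega
  -- basic objects
  set K : Finset (Finset V) := (univ : Finset V).powersetCard 2 with hK_def
  set Sh : Finset (Finset V) := ℱ.shadow with hSh_def
  have hSh2 : ∀ e ∈ Sh, e.card = 2 := by
    intro e he
    rw [hSh_def, mem_shadow_iff] at he
    obtain ⟨F, hF, x, hx, rfl⟩ := he
    rw [card_erase_of_mem hx, hF3 F hF]
  have hShK : Sh ⊆ K := fun e he =>
    mem_powersetCard.mpr ⟨subset_univ e, hSh2 e he⟩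
  set T : Finset (Finset V) := K \ Sh with hT_def
  set m : ℕ := T.card with hm_def
  have hT2 : ∀ e ∈ T, e.card = 2 := by
    intro e he
    rw [hT_def, mem_sdiff] at he
    exact (mem_powersetCard.mp he.1).2
  have hTSh : ∀ e ∈ T, e ∉ Sh := fun e he => (mem_sdiff.mp he).2
  have hpairSh : ∀ (x z : V) (F : Finset V), F ∈ ℱ → x ∈ F → z ∈ F → z ≠ x →
      ({x, z} : Finset V) ∈ Sh := by
    intro x z F hF hx hz hzx
    have hcard2 : ({x, z} : Finset V).card = 2 := by
      rw [card_insert_of_notMem (by simp [Ne.symm hzx]), card_singleton]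
    rw [hSh_def, Finset.mem_shadow_iff_exists_mem_card_add_one]
    exact ⟨F, hF, by simp [insert_subset_iff, hx, hz], by rw [hF3 F hF, hcard2]⟩
  have hshcard : ((Sh.card : ℝ)) = (n:ℝ)*((n:ℝ)-1)/2 - m := by
    have h1 : m = K.card - Sh.card := by rw [hm_def, hT_def, card_sdiff_of_subset hShK]
    have h2 : Sh.card ≤ K.card := card_le_card hShK
    have h3 : (K.card : ℝ) = (n:ℝ)*((n:ℝ)-1)/2 := by
      rw [hK_def, card_powersetCard, card_univ, hcard, Nat.cast_choose_two]
    have h4 : (m:ℝ) = (K.card:ℝ) - Sh.card := by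
      rw [h1]; push_cast [h2]; ring
    rw [← h3]; linarith
  -- degrees in T
  set deg : V → ℕ := fun x => (T.filter (fun e => x ∈ e)).card with hdeg_def
  have hsum : ∑ x : V, deg x = 2 * m := by
    calc ∑ x : V, deg x = ∑ x : V, ∑ e ∈ T, if x ∈ e then 1 else 0 := by
          refine Finset.sum_congr rfl fun x _ => ?_
          simp only [hdeg_def, Finset.card_filter]
      _ = ∑ e ∈ T, ∑ x : V, if x ∈ e then 1 else 0 := Finset.sum_comm
      _ = ∑ e ∈ T, e.card := by
          refine Finset.sum_congr rfl fun e _ => ?_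
          rw [← Finset.card_filter, Finset.filter_univ_mem]
      _ = ∑ e ∈ T, 2 := Finset.sum_congr rfl hT2
      _ = 2 * m := by rw [Finset.sum_const, hm_def, smul_eq_mul, mul_comm]
  obtain ⟨x₀, hx₀max⟩ : ∃ x : V, ∀ y : V, deg y ≤ deg x := by
    obtain ⟨x, _, hx⟩ := Finset.exists_max_image Finset.univ deg
      ⟨Classical.arbitrary V, Finset.mem_univ _⟩
    exact ⟨x, fun y => hx y (Finset.mem_univ y)⟩
  set Δ : ℕ := deg x₀ with hΔ_def
  have hA : 2 * m ≤ n * Δ := by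
    rw [← hsum]
    calc ∑ x : V, deg x ≤ ∑ _x : V, Δ := Finset.sum_le_sum fun x _ => hx₀max x
      _ = n * Δ := by rw [Finset.sum_const, card_univ, hcard, smul_eq_mul]
  -- neighborhood
  set Nx : Finset V := (T.filter (fun e => x₀ ∈ e)).biUnion (fun e => e.erase x₀) with hNx_def
  have hNxmem : ∀ y : V, y ∈ Nx ↔ (y ≠ x₀ ∧ ({x₀, y} : Finset V) ∈ T) := by
    intro y
    constructor
    · intro hy
      rw [hNx_def, Finset.mem_biUnion] at hy
      obtain ⟨e, he, hye⟩ := hy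
      rw [Finset.mem_filter] at he
      rw [Finset.mem_erase] at hye
      have := pair_eq_of_card_two (hT2 e he.1) he.2 hye.2 hye.1
      exact ⟨hye.1, this ▸ he.1⟩
    · rintro ⟨hyne, hyT⟩
      rw [hNx_def, Finset.mem_biUnion]
      exact ⟨{x₀, y}, Finset.mem_filter.mpr ⟨hyT, Finset.mem_insert_self _ _⟩,
        Finset.mem_erase.mpr ⟨hyne, by simp⟩⟩
  have hx₀Nx : x₀ ∉ Nx := fun h => ((hNxmem x₀).mp h).1 rfl
  have hNxcard : Nx.card = Δ := by
    rw [hNx_def, Finset.card_biUnion]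
    · calc ∑ e ∈ T.filter (fun e => x₀ ∈ e), (e.erase x₀).card
          = ∑ _e ∈ T.filter (fun e => x₀ ∈ e), 1 := by
            refine Finset.sum_congr rfl fun e he => ?_
            have he' := Finset.mem_filter.mp he
            rw [Finset.card_erase_of_mem he'.2, hT2 e he'.1]
        _ = Δ := by rw [Finset.sum_const, smul_eq_mul, mul_one, hΔ_def, hdeg_def]
    · intro e₁ h₁ e₂ h₂ hne
      rw [Finset.mem_coe, Finset.mem_filter] at h₁ h₂
      rw [Function.onFun, Finset.disjoint_left]
      intro y hy₁ hy₂
      rw [Finset.mem_erase] at hy₁ hy₂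
      exact hne (by
        rw [pair_eq_of_card_two (hT2 e₁ h₁.1) h₁.2 hy₁.2 hy₁.1,
          pair_eq_of_card_two (hT2 e₂ h₂.1) h₂.2 hy₂.2 hy₂.1])
  have hΔn : Δ + 1 ≤ n := by
    have h1 : (insert x₀ Nx).card = Δ + 1 := by
      rw [Finset.card_insert_of_notMem hx₀Nx, hNxcard]
    calc Δ + 1 = (insert x₀ Nx).card := h1.symm
      _ ≤ (univ : Finset V).card := card_le_card (subset_univ _)
      _ = n := by rw [card_univ, hcard]
  -- the excluded set S
  set S : Finset V := univ \ insert x₀ Nx with hS_def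
  have hScard : S.card = n - 1 - Δ := by
    rw [hS_def, card_sdiff_of_subset (subset_univ _), card_univ, hcard,
      Finset.card_insert_of_notMem hx₀Nx, hNxcard]
    omega
  -- the link
  set L : Finset (Finset V) := (ℱ.filter (fun F => x₀ ∈ F)).image (fun F => F.erase x₀)
    with hL_def
  have hLcard : (ℱ.filter (fun F => x₀ ∈ F)).card = L.card := by
    rw [hL_def]
    refine (Finset.card_image_of_injOn ?_).symm
    intro F₁ h₁ F₂ h₂ h
    rw [Finset.mem_coe, Finset.mem_filter] at h₁ h₂
    dsimp only at h
    rw [← Finset.insert_erase h₁.2, ← Finset.insert_erase h₂.2, h]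
  have hLSh : L ⊆ Sh := by
    intro e he
    rw [hL_def, Finset.mem_image] at he
    obtain ⟨F, hF, rfl⟩ := he
    rw [Finset.mem_filter] at hF
    exact Finset.erase_mem_shadow hF.1 hF.2
  have hLS : L ⊆ S.powersetCard 2 := by
    intro e he
    rw [hL_def, Finset.mem_image] at he
    obtain ⟨F, hF, rfl⟩ := he
    rw [Finset.mem_filter] at hF
    rw [mem_powersetCard]
    constructor
    · intro z hz
      rw [Finset.mem_erase] at hz
      rw [hS_def, Finset.mem_sdiff]
      refine ⟨mem_univ z, fun hmem => ?_⟩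
      rw [Finset.mem_insert] at hmem
      rcases hmem with rfl | hzNx
      · exact hz.1 rfl
      · exact hTSh _ ((hNxmem z).mp hzNx).2 (hpairSh x₀ z F hF.1 hF.2 hz.2 hz.1)
    · rw [Finset.card_erase_of_mem hF.2, hF3 F hF.1]
  set Tin : Finset (Finset V) := T.filter (fun e => e ⊆ S) with hTin_def
  have hTinS : Tin ⊆ S.powersetCard 2 := by
    intro e he
    rw [hTin_def, Finset.mem_filter] at he
    exact mem_powersetCard.mpr ⟨he.2, hT2 e he.1⟩
  have hdisj : Disjoint L Tin := by
    rw [Finset.disjoint_left]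
    intro e heL heT
    rw [hTin_def, Finset.mem_filter] at heT
    exact hTSh e heT.1 (hLSh heL)
  have hcount : L.card + Tin.card ≤ (n - 1 - Δ).choose 2 := by
    calc L.card + Tin.card = (L ∪ Tin).card := (Finset.card_union_of_disjoint hdisj).symm
      _ ≤ (S.powersetCard 2).card := card_le_card (Finset.union_subset hLS hTinS)
      _ = S.card.choose 2 := Finset.card_powersetCard 2 S
      _ = (n - 1 - Δ).choose 2 := by rw [hScard]
  have hTout : (T \ Tin).card ≤ Δ + Δ * (Δ - 1) := by
    have hsub : T \ Tin ⊆ (T.filter (fun e => x₀ ∈ e)) ∪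
        Nx.biUnion (fun y => (T.filter (fun e => y ∈ e)).erase {x₀, y}) := by
      intro e he
      rw [Finset.mem_sdiff, hTin_def, Finset.mem_filter] at he
      have heT : e ∈ T := he.1
      have hnsub : ¬ e ⊆ S := fun h => he.2 ⟨heT, h⟩
      rw [Finset.mem_union]
      by_cases hx₀e : x₀ ∈ e
      · exact Or.inl (Finset.mem_filter.mpr ⟨heT, hx₀e⟩)
      · obtain ⟨z, hze, hzS⟩ := Finset.not_subset.mp hnsub
        have hz' : z ∈ insert x₀ Nx := by
          by_contra hcon
          exact hzS (Finset.mem_sdiff.mpr ⟨mem_univ z, hcon⟩)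
        rw [Finset.mem_insert] at hz'
        rcases hz' with rfl | hzNx
        · exact absurd hze hx₀e
        · refine Or.inr (Finset.mem_biUnion.mpr ⟨z, hzNx, Finset.mem_erase.mpr ⟨?_, ?_⟩⟩)
          · intro hcontra
            exact hx₀e (hcontra ▸ Finset.mem_insert_self _ _)
          · exact Finset.mem_filter.mpr ⟨heT, hze⟩
    calc (T \ Tin).card ≤ ((T.filter (fun e => x₀ ∈ e)) ∪
          Nx.biUnion (fun y => (T.filter (fun e => y ∈ e)).erase {x₀, y})).card :=
        card_le_card hsub
      _ ≤ (T.filter (fun e => x₀ ∈ e)).card +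
          (Nx.biUnion (fun y => (T.filter (fun e => y ∈ e)).erase {x₀, y})).card :=
        Finset.card_union_le _ _
      _ ≤ Δ + ∑ y ∈ Nx, ((T.filter (fun e => y ∈ e)).erase {x₀, y}).card :=
        Nat.add_le_add (le_of_eq rfl) Finset.card_biUnion_le
      _ ≤ Δ + ∑ _y ∈ Nx, (Δ - 1) := by
        refine Nat.add_le_add_left (Finset.sum_le_sum fun y hy => ?_) Δ
        have hpT : ({x₀, y} : Finset V) ∈ T.filter (fun e => y ∈ e) :=
          Finset.mem_filter.mpr ⟨((hNxmem y).mp hy).2, by simp⟩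
        rw [Finset.card_erase_of_mem hpT]
        exact Nat.sub_le_sub_right (hx₀max y) 1
      _ = Δ + Δ * (Δ - 1) := by rw [Finset.sum_const, hNxcard, smul_eq_mul]
  have hsplit : m ≤ Tin.card + (T \ Tin).card := by
    rw [hm_def]
    calc T.card = (Tin ∪ (T \ Tin)).card := by
          rw [Finset.union_sdiff_of_subset (Finset.filter_subset _ _)]
    _ ≤ Tin.card + (T \ Tin).card := Finset.card_union_le _ _
  -- pass to reals
  have hn2 : (2:ℝ) ≤ (n:ℝ) := by exact_mod_cast hn
  have hM1 : (1:ℝ) ≤ (n:ℝ) - 1 := by linarith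
  have hΔn' : Δ ≤ n - 1 := by omega
  have hacast : ((n - 1 - Δ : ℕ) : ℝ) = ((n:ℝ) - 1) - (Δ:ℝ) := by
    rw [Nat.cast_sub hΔn', Nat.cast_sub (by omega : 1 ≤ n)]
    norm_num
  have hDM : (Δ:ℝ) ≤ (n:ℝ) - 1 := by
    have := hacast
    have h0 : (0:ℝ) ≤ ((n - 1 - Δ : ℕ) : ℝ) := Nat.cast_nonneg _
    linarith
  have hD0 : (0:ℝ) ≤ (Δ:ℝ) := Nat.cast_nonneg _
  have hAr : 2 * (m:ℝ) ≤ (n:ℝ) * (Δ:ℝ) := by exact_mod_cast hA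
  have hLr : s^2 * ((n:ℝ) * ((n:ℝ) - 1) / 2) ≤ (L.card : ℝ) := by
    rw [hs2, ← hLcard]
    exact hdeg x₀
  have hcount_r : (L.card : ℝ) + (Tin.card : ℝ) ≤
      (((n:ℝ) - 1) - (Δ:ℝ)) * ((((n:ℝ) - 1) - (Δ:ℝ)) - 1) / 2 := by
    calc (L.card : ℝ) + (Tin.card : ℝ) ≤ (((n - 1 - Δ).choose 2 : ℕ) : ℝ) := by
          exact_mod_cast hcount
      _ = (((n:ℝ) - 1) - (Δ:ℝ)) * ((((n:ℝ) - 1) - (Δ:ℝ)) - 1) / 2 := by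
          rw [Nat.cast_choose_two, hacast]
  have hToutN : m ≤ Tin.card + Δ * Δ := by
    have h3 : Δ + Δ * (Δ - 1) ≤ Δ * Δ := by
      rcases Nat.eq_zero_or_pos Δ with h | h
      · simp [h]
      · have h4 : Δ - 1 + 1 = Δ := Nat.succ_pred_eq_of_pos h
        have h5 : Δ + Δ * (Δ - 1) = Δ * ((Δ - 1) + 1) := by ring
        rw [h5, h4]
    exact hsplit.trans (Nat.add_le_add_left (hTout.trans h3) _)
  have hTout_r : (m : ℝ) ≤ (Tin.card : ℝ) + (Δ:ℝ) * (Δ:ℝ) := by exact_mod_cast hToutN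
  -- case analysis
  have hmain : (m : ℝ) ≤ (1 - s)^2 * (((n:ℝ) - 1) * (((n:ℝ) - 1) + 1)) := by
    by_cases hcase : (Δ:ℝ) ≤ 2 * (1 - s)^2 * ((n:ℝ) - 1)
    · have hN0 : (0:ℝ) ≤ (n:ℝ) := by linarith
      have h1 : (n:ℝ) * (Δ:ℝ) ≤ (n:ℝ) * (2 * (1 - s)^2 * ((n:ℝ) - 1)) :=
        mul_le_mul_of_nonneg_left hcase hN0
      have h2 : (n:ℝ) * (2 * (1 - s)^2 * ((n:ℝ) - 1))
          = 2 * ((1 - s)^2 * (((n:ℝ) - 1) * (((n:ℝ) - 1) + 1))) := by ring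
      linarith [hAr]
    · push_neg at hcase
      have ha2 : ((n:ℝ) - 1) - (Δ:ℝ) ≤ (1 - 2*(1-s)^2) * ((n:ℝ) - 1) := by nlinarith [hcase]
      have hTin0 : (0:ℝ) ≤ (Tin.card : ℝ) := Nat.cast_nonneg _
      have hLa : s^2 * (((n:ℝ)-1) * (((n:ℝ)-1)+1)) / 2 ≤
          (((n:ℝ) - 1) - (Δ:ℝ)) * ((((n:ℝ) - 1) - (Δ:ℝ)) - 1) / 2 - (Tin.card : ℝ) := by
        have h1 : s^2 * (((n:ℝ)-1) * (((n:ℝ)-1)+1)) / 2 = s^2 * ((n:ℝ) * ((n:ℝ) - 1) / 2) := by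
          ring
        linarith [hLr, hcount_r]
      have ha1 : s * ((n:ℝ) - 1) < ((n:ℝ) - 1) - (Δ:ℝ) := by
        by_contra h
        push_neg at h
        have ha0 : (0:ℝ) ≤ ((n:ℝ) - 1) - (Δ:ℝ) := by linarith [hDM]
        have hsq : (((n:ℝ) - 1) - (Δ:ℝ)) * (((n:ℝ) - 1) - (Δ:ℝ)) ≤ (s * ((n:ℝ) - 1)) * (s * ((n:ℝ) - 1)) :=
          mul_le_mul h h ha0 (by nlinarith)
        have hpos' : 0 < s * s * ((n:ℝ) - 1) := mul_pos (mul_pos (by linarith) (by linarith)) (by linarith)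
        nlinarith [hLa, hTin0, hM1, hs_half, ha0, hsq, hpos']
      have h2 : s^2*((((n:ℝ)-1)) * ((((n:ℝ)-1))+1))/2 + (m:ℝ) ≤
          (((n:ℝ) - 1) - (Δ:ℝ)) * ((((n:ℝ) - 1) - (Δ:ℝ)) - 1) / 2
            + (((n:ℝ)-1) - (((n:ℝ) - 1) - (Δ:ℝ)))^2 := by
        have hDsq : (((n:ℝ)-1) - (((n:ℝ) - 1) - (Δ:ℝ)))^2 = (Δ:ℝ) * (Δ:ℝ) := by ring
        rw [hDsq]
        linarith [hLa, hTout_r]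
      exact alg2 s ((n:ℝ) - 1) (((n:ℝ) - 1) - (Δ:ℝ)) (m:ℝ) hs_half hwc hw3 hM1 ha1 ha2 h2
        (Nat.cast_nonneg _)
  -- conclude
  rw [hshcard, ← hs2]
  linarith only [hmain]
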